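/- Let g : ℝ → ℝ be bounded, continuous and monotone increasing, let k ∈ L¹(ℝ), and suppose that for every absolutely continuous ψ : ℝ → ℝ with ψ′ ∈ L¹ one has (ψg)(−∞) − (ψg)(+∞) + ∫ ψ′(x)g(x) dx = −∫ ψ(x)k(x) dx (where (ψg)(±∞) denote the limits at ±∞, which exist). Then g is absolutely continuous with g(t) − g(−∞) = ∫_{−∞}^t k(x) dx for all t, and g′ = k almost everywhere. -/

import Mathlib

open MeasureTheory Filter

/-- If `g` is bounded, continuous, monotone increasing, `k ∈ L¹`, and for every absolutely
continuous `ψ` with `ψ' ∈ L¹` one has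
`(ψg)(−∞) − (ψg)(+∞) + ∫ ψ'(x)g(x) dx = −∫ ψ(x)k(x) dx`, then `g` is absolutely continuous
with `g(t) − g(−∞) = ∫_{−∞}^t k` and `g' = k` a.e. -/
theorem stmt2 (g k : ℝ → ℝ)
    (hgb : ∃ C, ∀ x, |g x| ≤ C) (hgc : Continuous g) (hgm : Monotone g)
    (hk : Integrable k)
    (hyp : ∀ (ψ ψ' : ℝ → ℝ) (A B : ℝ),
      (∀ x, HasDerivAt ψ (ψ' x) x) → Integrable ψ' →
      Tendsto (fun x => ψ x * g x) atBot (nhds A) →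
      Tendsto (fun x => ψ x * g x) atTop (nhds B) →
      A - B + ∫ x, ψ' x * g x = - ∫ x, ψ x * k x) :
    ∃ gm : ℝ, Tendsto g atBot (nhds gm) ∧
      (∀ t, g t - gm = ∫ x in Set.Iic t, k x) ∧
      (∀ᵐ x : ℝ ∂volume, deriv g x = k x) := by
  classical
  obtain ⟨C, hC⟩ := hgb
  have hbA : BddAbove (Set.range g) := ⟨C, by rintro _ ⟨x, rfl⟩; exact (abs_le.1 (hC x)).2⟩
  have hbB : BddBelow (Set.range g) := ⟨-C, by rintro _ ⟨x, rfl⟩; exact (abs_le.1 (hC x)).1⟩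
  set gm := ⨅ x, g x with hgm_def
  set gM := ⨆ x, g x with hgM_def
  have htb : Tendsto g atBot (nhds gm) := tendsto_atBot_ciInf hgm hbB
  have htt : Tendsto g atTop (nhds gM) := tendsto_atTop_ciSup hgm hbA
  have h1 : gm - gM = - ∫ x, k x := by
    have h := hyp (fun _ => (1 : ℝ)) (fun _ => (0 : ℝ)) gm gM
      (fun x => hasDerivAt_const x 1) (integrable_zero _ _ _)
      (by simpa using htb) (by simpa using htt)
    simpa using h
  have hIic : ∀ t : ℝ, (∫ x in Set.Iic t, k x) =
      (∫ x in Set.Iic (0 : ℝ), k x) + ∫ x in (0 : ℝ)..t, k x := by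
    intro t
    rw [← intervalIntegral.integral_Iic_sub_Iic hk.integrableOn hk.integrableOn]
    ring
  have hGc : Continuous fun t => ∫ x in Set.Iic t, k x := by
    have h : (fun t => ∫ x in Set.Iic t, k x)
        = fun t => (∫ x in Set.Iic (0 : ℝ), k x) + ∫ x in (0 : ℝ)..t, k x := funext hIic
    rw [h]
    exact continuous_const.add
      (intervalIntegral.continuous_primitive (fun a b => hk.intervalIntegrable) 0)
  -- the key step: identify `g` with `gm + ∫_{Iic ·} k`
  have key : ∀ t, g t = gm + ∫ y in Set.Iic t, k y := by
    have hae : ∀ᵐ x, g x = gm + ∫ y in Set.Iic x, k y := by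
      refine ae_eq_of_integral_contDiff_smul_eq hgc.locallyIntegrable
        (continuous_const.add hGc).locallyIntegrable ?_
      intro φ hφ hφs
      have hφc : Continuous φ := hφ.continuous
      have hφi : Integrable φ := hφc.integrable_of_hasCompactSupport hφs
      set I := ∫ x, φ x with hI
      set ψ : ℝ → ℝ := fun y => ∫ x in Set.Iic y, φ x with hψ
      have hψeq : ∀ y, ψ y = (∫ x in Set.Iic (0 : ℝ), φ x) + ∫ x in (0 : ℝ)..y, φ x := by
        intro y
        rw [← intervalIntegral.integral_Iic_sub_Iic hφi.integrableOn hφi.integrableOn]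
        ring
      have hψd : ∀ y, HasDerivAt ψ (φ y) y := by
        intro y
        have h1 : HasDerivAt (fun y => ∫ x in (0 : ℝ)..y, φ x) (φ y) y :=
          intervalIntegral.integral_hasDerivAt_right hφi.intervalIntegrable
            (hφc.stronglyMeasurableAtFilter _ _) hφc.continuousAt
        have h2 := h1.const_add (∫ x in Set.Iic (0 : ℝ), φ x)
        have h3 : (fun y => (∫ x in Set.Iic (0 : ℝ), φ x) + ∫ x in (0 : ℝ)..y, φ x) = ψ :=
          (funext hψeq).symm
        rwa [h3] at h2
      have hψc : Continuous ψ := continuous_iff_continuousAt.2 fun y => (hψd y).continuousAt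
      have hψbot : Tendsto ψ atBot (nhds 0) := by
        have h2 : Tendsto (fun y => ∫ x in y..(0 : ℝ), φ x) atBot
            (nhds (∫ x in Set.Iic (0 : ℝ), φ x)) :=
          intervalIntegral_tendsto_integral_Iic 0 hφi.integrableOn tendsto_id
        have h3 : Tendsto (fun y => (∫ x in Set.Iic (0 : ℝ), φ x) - ∫ x in y..(0 : ℝ), φ x)
            atBot (nhds 0) := by
          simpa using ((tendsto_const_nhds :
            Tendsto _ atBot (nhds (∫ x in Set.Iic (0 : ℝ), φ x))).sub h2)
        refine h3.congr fun y => ?_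
        rw [hψeq y, intervalIntegral.integral_symm]
        ring
      have hψtop : Tendsto ψ atTop (nhds I) := by
        have h2 : Tendsto (fun y => ∫ x in (0 : ℝ)..y, φ x) atTop
            (nhds (∫ x in Set.Ioi (0 : ℝ), φ x)) :=
          intervalIntegral_tendsto_integral_Ioi 0 hφi.integrableOn tendsto_id
        have h3 := (tendsto_const_nhds :
          Tendsto _ atTop (nhds (∫ x in Set.Iic (0 : ℝ), φ x))).add h2
        have h4 : (∫ x in Set.Iic (0 : ℝ), φ x) + ∫ x in Set.Ioi (0 : ℝ), φ x = I :=
          intervalIntegral.integral_Iic_add_Ioi hφi.integrableOn hφi.integrableOn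
        rw [h4] at h3
        exact h3.congr fun y => (hψeq y).symm
      have hψb : ∀ y, ‖ψ y‖ ≤ ∫ x, ‖φ x‖ := by
        intro y
        calc ‖ψ y‖ ≤ ∫ x in Set.Iic y, ‖φ x‖ := norm_integral_le_integral_norm φ
          _ ≤ ∫ x, ‖φ x‖ :=
            setIntegral_le_integral hφi.norm (Filter.Eventually.of_forall fun x => norm_nonneg _)
      have hψk : Integrable (fun y => ψ y * k y) :=
        Integrable.bdd_mul hk hψc.aestronglyMeasurable (Filter.Eventually.of_forall hψb)
      have hA : Tendsto (fun x => ψ x * g x) atBot (nhds 0) := by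
        simpa using hψbot.mul htb
      have hB : Tendsto (fun x => ψ x * g x) atTop (nhds (I * gM)) := hψtop.mul htt
      have hmain := hyp ψ φ 0 (I * gM) hψd hφi hA hB
      -- Fubini
      have hbase : Integrable (fun p : ℝ × ℝ => φ p.1 * k p.2) (volume.prod volume) :=
        hφi.mul_prod hk
      have hsm : MeasurableSet {p : ℝ × ℝ | p.2 ≤ p.1} :=
        measurableSet_le measurable_snd measurable_fst
      set F : ℝ × ℝ → ℝ := Set.indicator {p : ℝ × ℝ | p.2 ≤ p.1} (fun p => φ p.1 * k p.2)
        with hF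
      have hFi : Integrable F (volume.prod volume) := hbase.indicator hsm
      have hswap : (∫ x, ∫ y, F (x, y)) = ∫ y, ∫ x, F (x, y) :=
        integral_integral_swap (f := fun x y => F (x, y)) hFi
      have hinner : ∀ x, (∫ y, F (x, y)) = φ x * ∫ y in Set.Iic x, k y := by
        intro x
        have h5 : (fun y => F (x, y)) = Set.indicator (Set.Iic x) (fun y => φ x * k y) := by
          funext y
          by_cases h : y ≤ x <;> simp [hF, Set.indicator, h, Set.mem_Iic]
        rw [h5, integral_indicator measurableSet_Iic, integral_const_mul]
      have houter : ∀ y, (∫ x, F (x, y)) = (I - ψ y) * k y := by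
        intro y
        have h5 : (fun x => F (x, y)) = Set.indicator (Set.Ici y) (fun x => φ x * k y) := by
          funext x
          by_cases h : y ≤ x <;> simp [hF, Set.indicator, h, Set.mem_Ici]
        rw [h5, integral_indicator measurableSet_Ici, integral_mul_const]
        congr 1
        rw [integral_Ici_eq_integral_Ioi]
        have h6 : (∫ x in Set.Iic y, φ x) + ∫ x in Set.Ioi y, φ x = I :=
          intervalIntegral.integral_Iic_add_Ioi hφi.integrableOn hφi.integrableOn
        have h7 : ψ y = ∫ x in Set.Iic y, φ x := rfl
        linarith
      have hFub : (∫ x, φ x * ∫ y in Set.Iic x, k y) = ∫ y, (I - ψ y) * k y := by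
        calc (∫ x, φ x * ∫ y in Set.Iic x, k y) = ∫ x, ∫ y, F (x, y) := by
              exact integral_congr_ae (Filter.Eventually.of_forall fun x => (hinner x).symm)
          _ = ∫ y, ∫ x, F (x, y) := hswap
          _ = ∫ y, (I - ψ y) * k y :=
              integral_congr_ae (Filter.Eventually.of_forall fun y => houter y)
      have hexp : (∫ y, (I - ψ y) * k y) = I * (∫ y, k y) - ∫ y, ψ y * k y := by
        have h5 : (fun y => (I - ψ y) * k y) = fun y => I * k y - ψ y * k y :=
          funext fun y => by ring
        rw [h5, integral_sub (hk.const_mul I) hψk, integral_const_mul]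
      -- now collect everything
      have hWb : ∀ x, ‖∫ y in Set.Iic x, k y‖ ≤ ∫ y, ‖k y‖ := by
        intro x
        calc ‖∫ y in Set.Iic x, k y‖ ≤ ∫ y in Set.Iic x, ‖k y‖ := norm_integral_le_integral_norm k
          _ ≤ ∫ y, ‖k y‖ :=
            setIntegral_le_integral hk.norm (Filter.Eventually.of_forall fun x => norm_nonneg _)
      have hφW : Integrable (fun x => φ x * ∫ y in Set.Iic x, k y) := by
        have := Integrable.bdd_mul hφi hGc.aestronglyMeasurable (Filter.Eventually.of_forall hWb)
        exact this.congr (Filter.Eventually.of_forall fun x => mul_comm _ _)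
      have hRHS : (∫ x, φ x * (gm + ∫ y in Set.Iic x, k y))
          = gm * I + (I * (∫ y, k y) - ∫ y, ψ y * k y) := by
        have h5 : (fun x => φ x * (gm + ∫ y in Set.Iic x, k y))
            = fun x => gm * φ x + φ x * ∫ y in Set.Iic x, k y := funext fun x => by ring
        rw [h5, integral_add (hφi.const_mul gm) hφW, integral_const_mul, hFub, hexp]
      have hLHS : (∫ x, φ x * g x) = I * gM - ∫ y, ψ y * k y := by linarith
      have hIk : I * gM = I * gm + I * ∫ x, k x := by
        have : gM = gm + ∫ x, k x := by linarith
        rw [this]; ring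
      simp only [smul_eq_mul]
      rw [hLHS, hRHS]
      linarith
    have heq : g = fun t => gm + ∫ y in Set.Iic t, k y :=
      (hgc.ae_eq_iff_eq volume (continuous_const.add hGc)).1 hae
    exact fun t => congrFun heq t
  refine ⟨gm, htb, fun t => by rw [key t]; ring, ?_⟩
  -- the a.e. derivative
  have hst : ∀ x, hgm.stieltjesFunction x = g x := by
    intro x
    rw [hgm.stieltjesFunction_eq]
    exact rightLim_eq_of_tendsto
      ((hgc.tendsto x).mono_left nhdsWithin_le_nhds)
  have hstf : ⇑hgm.stieltjesFunction = g := funext hst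
  set μg := hgm.stieltjesFunction.measure with hμg
  have hIoc : ∀ a b : ℝ, a ≤ b → (∫ x in Set.Ioc a b, k x) = g b - g a := by
    intro a b hab
    rw [key b, key a, ← intervalIntegral.integral_of_le hab,
      ← intervalIntegral.integral_Iic_sub_Iic hk.integrableOn hk.integrableOn]
    ring
  have hμg_Ioc : ∀ a b : ℝ, a ≤ b →
      μg (Set.Ioc a b) = ENNReal.ofReal (∫ x in Set.Ioc a b, k x) := by
    intro a b hab
    rw [StieltjesFunction.measure_Ioc, hst, hst, hIoc a b hab]
  haveI hμg_fin : IsFiniteMeasure μg :=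
    hgm.stieltjesFunction.isFiniteMeasure (by rw [hstf]; exact htb) (by rw [hstf]; exact htt)
  set kp : ℝ → ENNReal := fun x => ENNReal.ofReal (k x) with hkp
  set kn : ℝ → ENNReal := fun x => ENNReal.ofReal (-(k x)) with hkn
  have hkpm : AEMeasurable kp := ENNReal.measurable_ofReal.comp_aemeasurable hk.aemeasurable
  have hknm : AEMeasurable kn :=
    ENNReal.measurable_ofReal.comp_aemeasurable hk.aemeasurable.neg
  haveI hfinp : IsFiniteMeasure (volume.withDensity kp) :=
    isFiniteMeasure_withDensity_ofReal hk.2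
  haveI hfinn : IsFiniteMeasure (volume.withDensity kn) :=
    isFiniteMeasure_withDensity_ofReal hk.neg.2
  have hlint : ∀ (f : ℝ → ℝ), Integrable f → ∀ a b : ℝ,
      (∫⁻ x in Set.Ioc a b, ENNReal.ofReal (f x))
        = ENNReal.ofReal (∫ x in Set.Ioc a b, max (f x) 0) := by
    intro f hf a b
    rw [ofReal_integral_eq_lintegral_ofReal hf.integrableOn.pos_part
      (Filter.Eventually.of_forall fun x => le_max_right _ _)]
    refine lintegral_congr fun x => ?_
    rcases le_total (f x) 0 with h | h
    · rw [max_eq_right h, ENNReal.ofReal_eq_zero.2 h, ENNReal.ofReal_zero]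
    · rw [max_eq_left h]
  have hmeq : μg + volume.withDensity kn = volume.withDensity kp := by
    refine Measure.ext_of_Ioc _ _ ?_
    intro a b hab
    rw [Measure.add_apply, hμg_Ioc a b hab.le, withDensity_apply _ measurableSet_Ioc,
      withDensity_apply _ measurableSet_Ioc, hlint k hk a b, hlint (fun x => -(k x)) hk.neg a b]
    have hppart : Integrable (fun x => max (k x) 0) := hk.pos_part
    have hnpart : Integrable (fun x => max (-(k x)) 0) := hk.neg.pos_part
    have hsub : (∫ x in Set.Ioc a b, k x)
        = (∫ x in Set.Ioc a b, max (k x) 0) - ∫ x in Set.Ioc a b, max (-(k x)) 0 := by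
      rw [← integral_sub hppart.integrableOn hnpart.integrableOn]
      refine integral_congr_ae (Filter.Eventually.of_forall fun x => ?_)
      rcases le_total (k x) 0 with h | h
      · simp [max_eq_right h, max_eq_left (neg_nonneg.2 h)]
      · simp [max_eq_left h, max_eq_right (neg_nonpos.2 h)]
    have hknn : (0 : ℝ) ≤ ∫ x in Set.Ioc a b, max (-(k x)) 0 :=
      integral_nonneg fun x => le_max_right _ _
    have hknn2 : (0 : ℝ) ≤ ∫ x in Set.Ioc a b, k x := by
      rw [hIoc a b hab.le]
      have := hgm hab.le
      linarith
    rw [← ENNReal.ofReal_add hknn2 hknn, hsub]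
    congr 1
    ring
  have hrn : ∀ᵐ x, (μg.rnDeriv volume x) + kn x = kp x := by
    have h2 := Measure.rnDeriv_add μg (volume.withDensity kn) volume
    have h3 := Measure.rnDeriv_withDensity₀ volume hknm
    have h4 := Measure.rnDeriv_withDensity₀ volume hkpm
    rw [hmeq] at h2
    filter_upwards [h2, h3, h4] with x e2 e3 e4
    rw [← e4, e2, Pi.add_apply, e3]
  filter_upwards [hgm.ae_hasDerivAt, hrn] with x hd hr
  rw [hd.deriv]
  rcases le_or_gt 0 (k x) with h | h
  · have hz : kn x = 0 := by
      simp only [hkn, ENNReal.ofReal_eq_zero]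
      linarith
    rw [hz, add_zero] at hr
    rw [← hμg, hr, hkp, ENNReal.toReal_ofReal h]
  · exfalso
    have hzp : kp x = 0 := by
      simp only [hkp, ENNReal.ofReal_eq_zero]
      linarith
    rw [hzp] at hr
    have hn0 : kn x = 0 := (add_eq_zero.1 hr).2
    have : (0 : ENNReal) < kn x := by
      simp only [hkn]
      exact ENNReal.ofReal_pos.2 (by linarith)
    rw [hn0] at this
    exact lt_irrefl _ this
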